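/- arXiv:2404.11250 — 3 statements merged into one kernel-verified Lean document; each statement's English description precedes it below -/
import Mathlib

section
/- Under the Kantorovich hypotheses, a Newton sequence for F starting at u* exists; that is, there is a sequence (u^(k)) in X with u^(0) = u* such that for every k the derivative F'_{u^(k)} is a continuous linear bijection from X onto Y, u^(k+1) = u^(k) − (F'_{u^(k)})⁻¹ F(u^(k)), and every iterate u^(k) lies in the closed ball of radius r⁻ around u*. -/
open Metric

set_option maxHeartbeats 2000000

lemma invOneSub_norm_le {R : Type*} [NormedRing R] [CompleteSpace R] [NormOneClass R]
    {m : R} (h : ‖m‖ < 1) : ‖(((Units.oneSub m h)⁻¹ : Rˣ) : R)‖ ≤ (1 - ‖m‖)⁻¹ := by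
  have hsum : Summable fun n : ℕ => ‖m‖ ^ n :=
    summable_geometric_of_lt_one (norm_nonneg m) h
  have hsum' : Summable fun n : ℕ => ‖m ^ n‖ :=
    hsum.of_nonneg_of_le (fun n => norm_nonneg _) (fun n => norm_pow_le m n)
  calc ‖(((Units.oneSub m h)⁻¹ : Rˣ) : R)‖ = ‖∑' n : ℕ, m ^ n‖ := rfl
    _ ≤ ∑' n : ℕ, ‖m ^ n‖ := norm_tsum_le_tsum_norm hsum'
    _ ≤ ∑' n : ℕ, ‖m‖ ^ n := Summable.tsum_le_tsum (fun n => norm_pow_le m n) hsum' hsum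
    _ = (1 - ‖m‖)⁻¹ := tsum_geometric_of_lt_one (norm_nonneg m) h

lemma taylor_bound {X Y : Type*} [NormedAddCommGroup X] [NormedSpace ℝ X]
    [NormedAddCommGroup Y] [NormedSpace ℝ Y] [CompleteSpace Y]
    (F : X → Y) (F' : X → X →L[ℝ] Y) (D : Set X)
    (hdiff : ∀ u ∈ D, HasFDerivAt F (F' u) u)
    (K : ℝ) (hK : 0 ≤ K)
    (hLip : ∀ u₁ ∈ D, ∀ u₂ ∈ D, ‖F' u₁ - F' u₂‖ ≤ K * ‖u₁ - u₂‖)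
    (u v : X) (hseg : ∀ s ∈ Set.Icc (0:ℝ) 1, u + s • (v - u) ∈ D) :
    ‖F v - F u - F' u (v - u)‖ ≤ K / 2 * ‖v - u‖ ^ 2 := by
  set w := v - u with hw
  set γ : ℝ → X := fun s => u + s • w with hγ
  have hγd : ∀ s : ℝ, HasDerivAt γ w s := by
    intro s
    simpa [γ] using ((hasDerivAt_id s).smul_const w).const_add u
  set g' : ℝ → Y := fun s => F' (γ s) w with hg'
  have hgd : ∀ s ∈ Set.uIcc (0:ℝ) 1, HasDerivAt (fun s => F (γ s)) (g' s) s := by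
    intro s hs
    rw [Set.uIcc_of_le zero_le_one] at hs
    exact (hdiff _ (hseg s hs)).comp_hasDerivAt s (hγd s)
  have hlip' : LipschitzOnWith (Real.toNNReal (K * ‖w‖ * ‖w‖)) g' (Set.Icc (0:ℝ) 1) := by
    rw [lipschitzOnWith_iff_dist_le_mul]
    intro s₁ hs₁ s₂ hs₂
    rw [dist_eq_norm, dist_eq_norm]
    have : g' s₁ - g' s₂ = (F' (γ s₁) - F' (γ s₂)) w := by
      simp [g', ContinuousLinearMap.sub_apply]
    rw [this]
    calc ‖(F' (γ s₁) - F' (γ s₂)) w‖ ≤ ‖F' (γ s₁) - F' (γ s₂)‖ * ‖w‖ :=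
          ContinuousLinearMap.le_opNorm _ _
      _ ≤ K * ‖γ s₁ - γ s₂‖ * ‖w‖ := by
          gcongr
          exact hLip _ (hseg _ hs₁) _ (hseg _ hs₂)
      _ = K * ‖w‖ * ‖w‖ * ‖s₁ - s₂‖ := by
          have : γ s₁ - γ s₂ = (s₁ - s₂) • w := by
            simp [γ, sub_smul]
          rw [this, norm_smul, Real.norm_eq_abs]; ring
      _ ≤ (Real.toNNReal (K * ‖w‖ * ‖w‖) : ℝ) * ‖s₁ - s₂‖ := by
          gcongr
          exact Real.le_coe_toNNReal _
  have hcont : ContinuousOn g' (Set.uIcc (0:ℝ) 1) := by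
    rw [Set.uIcc_of_le zero_le_one]
    exact hlip'.continuousOn
  have hint : IntervalIntegrable g' MeasureTheory.volume 0 1 :=
    hcont.intervalIntegrable
  have hFTC : ∫ s in (0:ℝ)..1, g' s = F (γ 1) - F (γ 0) :=
    intervalIntegral.integral_eq_sub_of_hasDerivAt hgd hint
  have hγ1 : γ 1 = v := by simp [γ, w]
  have hγ0 : γ 0 = u := by simp [γ]
  have hkey : F v - F u - F' u w = ∫ s in (0:ℝ)..1, (g' s - F' u w) := by
    rw [intervalIntegral.integral_sub hint intervalIntegrable_const, hFTC, hγ1, hγ0]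
    simp
  rw [hkey]
  have hbound : ∀ᵐ s ∂MeasureTheory.volume.restrict (Set.uIoc (0:ℝ) 1),
      ‖g' s - F' u w‖ ≤ K * ‖w‖ ^ 2 * s := by
    refine MeasureTheory.ae_restrict_of_forall_mem measurableSet_uIoc ?_
    intro s hs
    rw [Set.uIoc_of_le zero_le_one] at hs
    have hsmem : s ∈ Set.Icc (0:ℝ) 1 := ⟨hs.1.le, hs.2⟩
    have : g' s - F' u w = (F' (γ s) - F' u) w := by
      simp [g', ContinuousLinearMap.sub_apply]
    rw [this]
    calc ‖(F' (γ s) - F' u) w‖ ≤ ‖F' (γ s) - F' u‖ * ‖w‖ := ContinuousLinearMap.le_opNorm _ _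
      _ ≤ K * ‖γ s - u‖ * ‖w‖ := by
          gcongr
          exact hLip _ (hseg _ hsmem) _ (by simpa using hseg 0 (by norm_num))
      _ = K * ‖w‖ ^ 2 * s := by
          have : γ s - u = s • w := by simp [γ]
          rw [this, norm_smul, Real.norm_eq_abs, abs_of_nonneg hs.1.le]; ring
  have hbint : IntervalIntegrable (fun s => K * ‖w‖ ^ 2 * s) MeasureTheory.volume 0 1 :=
    (continuous_const.mul continuous_id).intervalIntegrable 0 1
  calc ‖∫ s in (0:ℝ)..1, (g' s - F' u w)‖ ≤ |∫ s in (0:ℝ)..1, K * ‖w‖ ^ 2 * s| :=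
        intervalIntegral.norm_integral_le_abs_of_norm_le hbound hbint
    _ = K / 2 * ‖w‖ ^ 2 := by
        rw [intervalIntegral.integral_const_mul, integral_id]
        rw [abs_of_nonneg (by positivity)]
        ring

/-- Newton–Kantorovich: existence of a Newton sequence for `F` starting at `ustar`,
whose iterates all lie in the closed ball of radius `r⁻` around `ustar`. -/
theorem newton_kantorovich_sequence_exists
    {X Y : Type*} [NormedAddCommGroup X] [NormedSpace ℝ X] [CompleteSpace X]
    [NormedAddCommGroup Y] [NormedSpace ℝ Y] [CompleteSpace Y]
    (F : X → Y) (F' : X → X →L[ℝ] Y)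
    (Dstar : Set X) (hDopen : IsOpen Dstar) (hDconv : Convex ℝ Dstar)
    (hdiff : ∀ u ∈ Dstar, HasFDerivAt F (F' u) u)
    (K : ℝ) (hK : 0 < K)
    (hLip : ∀ u₁ ∈ Dstar, ∀ u₂ ∈ Dstar, ‖F' u₁ - F' u₂‖ ≤ K * ‖u₁ - u₂‖)
    (ustar : X) (hustar : ustar ∈ Dstar)
    (Γ : X ≃L[ℝ] Y) (hΓ : (Γ : X →L[ℝ] Y) = F' ustar)
    (β α rminus : ℝ)
    (hβ : β = ‖(Γ.symm : Y →L[ℝ] X)‖)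
    (hα : α = ‖Γ.symm (F ustar)‖)
    (hsmall : β * K * α ≤ 1 / 2)
    (hrminus : rminus = (1 - Real.sqrt (1 - 2 * β * K * α)) / (β * K))
    (hball : closedBall ustar rminus ⊆ Dstar) :
    ∃ u : ℕ → X, u 0 = ustar ∧
      (∀ k, ∃ e : X ≃L[ℝ] Y, (e : X →L[ℝ] Y) = F' (u k) ∧
        u (k + 1) = u k - e.symm (F (u k))) ∧
      (∀ k, u k ∈ closedBall ustar rminus) := by
  have hα0 : 0 ≤ α := hα ▸ norm_nonneg _
  rcases eq_or_lt_of_le hα0 with hα0' | hαpos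
  · -- degenerate case α = 0 : F ustar = 0, constant sequence
    have hΓF0 : Γ.symm (F ustar) = 0 := by
      rw [← norm_eq_zero, ← hα, ← hα0']
    have hF0 : F ustar = 0 := by
      have := congrArg Γ hΓF0
      simpa using this
    have hr0 : rminus = 0 := by
      rw [hrminus, ← hα0']
      simp
    refine ⟨fun _ => ustar, rfl, fun k => ⟨Γ, hΓ, by simp [hF0]⟩, fun k => by simp [hr0]⟩
  · -- main case α > 0
    have hβpos : 0 < β := by
      have hle : α ≤ β * ‖F ustar‖ := by
        rw [hα, hβ]
        exact (Γ.symm : Y →L[ℝ] X).le_opNorm (F ustar)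
      nlinarith [norm_nonneg (F ustar)]
    haveI : Nontrivial X := nontrivial_of_ne (Γ.symm (F ustar)) 0 (by
      intro h
      exact hαpos.ne' (hα.trans (by rw [h, norm_zero])))
    set a := β * K with ha
    have hapos : 0 < a := mul_pos hβpos hK
    set s := Real.sqrt (1 - 2 * β * K * α) with hs
    have harg : 0 ≤ 1 - 2 * β * K * α := by nlinarith
    have hs0 : 0 ≤ s := Real.sqrt_nonneg _
    have hs2 : s ^ 2 = 1 - 2 * β * K * α := Real.sq_sqrt harg
    have hs1 : s < 1 := by nlinarith [mul_pos (mul_pos hβpos hK) hαpos]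
    have har : a * rminus = 1 - s := by
      rw [hrminus]
      field_simp
    have hrpos : 0 < rminus := by
      rw [hrminus]
      exact div_pos (by linarith) hapos
    set rplus := (1 + s) / a with hrplus
    have haR : a * rplus = 1 + s := by
      rw [hrplus]; field_simp
    have hrle : rminus ≤ rplus := by
      rw [hrminus, hrplus]
      gcongr <;> linarith
    have hsum : a * rminus + a * rplus = 2 := by
      rw [har, haR]; ring
    have hprod : a * (rminus * rplus) = 2 * α := by
      have h1 : (a * rminus) * (a * rplus) = 1 - s ^ 2 := by rw [har, haR]; ring
      have h2 : a * (a * (rminus * rplus)) = a * (2 * α) := by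
        linear_combination h1 - hs2 - (2 * α) * ha
      exact mul_left_cancel₀ hapos.ne' h2
    have hfact : ∀ tt : ℝ, a / 2 * tt ^ 2 - tt + α = a / 2 * (rminus - tt) * (rplus - tt) := by
      intro tt
      linear_combination (tt / 2) * hsum - (1 / 2) * hprod
    -- the scalar Newton (majorant) sequence
    obtain ⟨t, ht0, hts⟩ : ∃ t : ℕ → ℝ, t 0 = 0 ∧
        ∀ k, t (k + 1) = t k + (a / 2 * (t k) ^ 2 - t k + α) / (1 - a * t k) :=
      ⟨fun k => Nat.rec (motive := fun _ => ℝ) 0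
        (fun _ tk => tk + (a / 2 * tk ^ 2 - tk + α) / (1 - a * tk)) k, rfl, fun _ => rfl⟩
    have hscal : ∀ k, 0 ≤ t k ∧ t k < rminus := by
      intro k
      induction k with
      | zero => exact ⟨le_of_eq ht0.symm, ht0 ▸ hrpos⟩
      | succ k ih =>
        obtain ⟨h1, h2⟩ := ih
        have hd : 0 < 1 - a * t k := by
          have h3 := mul_lt_mul_of_pos_left h2 hapos
          linarith [hs0, har]
        have hp : 0 < a / 2 * (t k) ^ 2 - t k + α := by
          rw [hfact (t k)]
          exact mul_pos (mul_pos (by positivity) (by linarith)) (by linarith)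
        constructor
        · have := div_pos hp hd
          rw [hts k]; linarith
        · have hiden : (rminus - t k) * (1 - a * t k) - (a / 2 * (t k) ^ 2 - t k + α)
              = a / 2 * (rminus - t k) ^ 2 := by
            linear_combination (-1) * hfact (t k) - ((rminus - t k) / 2) * hsum
          have hpos2 : 0 < a / 2 * (rminus - t k) ^ 2 :=
            mul_pos (by positivity) (pow_pos (by linarith) 2)
          have hXlt : (a / 2 * (t k) ^ 2 - t k + α) / (1 - a * t k) < rminus - t k := by
            rw [div_lt_iff₀ hd]
            linarith [hiden, hpos2]
          rw [hts k]; linarith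
    have hdpos : ∀ k, 0 < 1 - a * t k := by
      intro k
      obtain ⟨h1, h2⟩ := hscal k
      have h3 := mul_lt_mul_of_pos_left h2 hapos
      linarith [hs0, har]
    have hppos : ∀ k, 0 < a / 2 * (t k) ^ 2 - t k + α := by
      intro k
      obtain ⟨h1, h2⟩ := hscal k
      rw [hfact (t k)]
      exact mul_pos (mul_pos (by positivity) (by linarith)) (by linarith)
    have hstep : ∀ k, t (k + 1) - t k = (a / 2 * (t k) ^ 2 - t k + α) / (1 - a * t k) := by
      intro k; rw [hts k]; ring
    have hΔpos : ∀ k, 0 < t (k + 1) - t k := by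
      intro k; rw [hstep k]; exact div_pos (hppos k) (hdpos k)
    have hpnext : ∀ k, a / 2 * (t (k + 1)) ^ 2 - t (k + 1) + α
        = a / 2 * (t (k + 1) - t k) ^ 2 := by
      intro k
      have hd := (hdpos k).ne'
      have hdm : (a / 2 * (t k) ^ 2 - t k + α) / (1 - a * t k) * (1 - a * t k)
          = a / 2 * (t k) ^ 2 - t k + α := div_mul_cancel₀ _ hd
      rw [hts k]
      linear_combination (-1) * hdm
    -- the vector Newton sequence
    obtain ⟨u, hu0, hus⟩ : ∃ u : ℕ → X, u 0 = ustar ∧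
        ∀ k, u (k + 1) = u k - (F' (u k)).inverse (F (u k)) :=
      ⟨fun k => Nat.rec (motive := fun _ => X) ustar
        (fun _ uk => uk - (F' uk).inverse (F uk)) k, rfl, fun _ => rfl⟩
    have hmemD : ∀ v : X, ‖v - ustar‖ ≤ rminus → v ∈ Dstar := by
      intro v hv
      exact hball (by simpa [Metric.mem_closedBall, dist_eq_norm] using hv)
    -- invertibility of the derivative near ustar, with inverse bound
    have hinvert : ∀ (v : X) (tt : ℝ), 0 ≤ tt → tt < rminus → ‖v - ustar‖ ≤ tt →
        ∃ e : X ≃L[ℝ] Y, (e : X →L[ℝ] Y) = F' v ∧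
          ‖(e.symm : Y →L[ℝ] X)‖ ≤ β / (1 - a * tt) := by
      intro v tt htt0 httr hv
      have hvD : v ∈ Dstar := hmemD v (hv.trans httr.le)
      have hatt : a * tt < 1 - s := by
        rw [← har]
        exact mul_lt_mul_of_pos_left httr hapos
      have hdtt : 0 < 1 - a * tt := by linarith
      set m : X →L[ℝ] X := (Γ.symm : Y →L[ℝ] X).comp (F' ustar - F' v) with hm
      have hmnorm : ‖m‖ ≤ a * tt := by
        calc ‖m‖ ≤ ‖(Γ.symm : Y →L[ℝ] X)‖ * ‖F' ustar - F' v‖ :=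
              ContinuousLinearMap.opNorm_comp_le _ _
          _ ≤ β * (K * ‖ustar - v‖) := by
              refine mul_le_mul (le_of_eq hβ.symm) (hLip ustar hustar v hvD)
                (norm_nonneg _) hβpos.le
          _ = β * K * ‖v - ustar‖ := by rw [norm_sub_rev]; ring
          _ ≤ β * K * tt := by
              have : (0:ℝ) ≤ β * K := by positivity
              exact mul_le_mul_of_nonneg_left hv this
          _ = a * tt := by rw [ha]
      have hm1 : ‖m‖ < 1 := lt_of_le_of_lt hmnorm (by linarith)
      let e1 : X ≃L[ℝ] X := ContinuousLinearEquiv.ofUnit (Units.oneSub m hm1)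
      refine ⟨e1.trans Γ, ?_, ?_⟩
      · ext x
        have hΓx : Γ x = F' ustar x := by rw [← hΓ]; rfl
        have hmx : m x = Γ.symm ((F' ustar) x - (F' v) x) := rfl
        show Γ (e1 x) = F' v x
        have he1x : e1 x = x - m x := rfl
        rw [he1x, map_sub, hmx, Γ.apply_symm_apply, hΓx]
        abel
      · have hsymm : (((e1.trans Γ).symm : Y ≃L[ℝ] X) : Y →L[ℝ] X)
            = ((e1.symm : X →L[ℝ] X)).comp (Γ.symm : Y →L[ℝ] X) := by
          rfl
        rw [hsymm]
        have h1 : ‖(e1.symm : X →L[ℝ] X)‖ ≤ (1 - ‖m‖)⁻¹ := invOneSub_norm_le hm1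
        calc ‖((e1.symm : X →L[ℝ] X)).comp (Γ.symm : Y →L[ℝ] X)‖
            ≤ ‖(e1.symm : X →L[ℝ] X)‖ * ‖(Γ.symm : Y →L[ℝ] X)‖ :=
              ContinuousLinearMap.opNorm_comp_le _ _
          _ ≤ (1 - ‖m‖)⁻¹ * β := by
              refine mul_le_mul h1 (le_of_eq hβ.symm) (norm_nonneg _) (inv_nonneg.mpr (by linarith))
          _ ≤ (1 - a * tt)⁻¹ * β := by
              have h2 : 1 - a * tt ≤ 1 - ‖m‖ := by linarith
              have h3 : (1 - ‖m‖)⁻¹ ≤ (1 - a * tt)⁻¹ := by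
                apply inv_anti₀ hdtt h2
              exact mul_le_mul_of_nonneg_right h3 hβpos.le
          _ = β / (1 - a * tt) := by rw [div_eq_inv_mul]
    -- how the recursion unfolds given an equiv realizing the derivative
    have hstep_eq : ∀ (j : ℕ) (e : X ≃L[ℝ] Y), (e : X →L[ℝ] Y) = F' (u j) →
        u (j + 1) = u j - e.symm (F (u j)) := by
      intro j e he
      rw [hus j, ← he, ContinuousLinearMap.inverse_equiv]
      rfl
    -- main induction
    have hmain : ∀ k, ‖u k - ustar‖ ≤ t k ∧ ‖u (k + 1) - u k‖ ≤ t (k + 1) - t k := by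
      intro k
      induction k with
      | zero =>
        refine ⟨by simp [hu0, ht0], ?_⟩
        have h1 : u 1 = ustar - Γ.symm (F ustar) := by
          have := hstep_eq 0 Γ (by rw [hu0, hΓ])
          rwa [hu0] at this
        have h2 : u 1 - u 0 = -(Γ.symm (F ustar)) := by
          rw [h1, hu0]; abel
        have ht1 : t 1 = α := by
          rw [hts 0, ht0]; simp
        rw [h2, norm_neg, ← hα, ht1, ht0]
        linarith
      | succ k ih =>
        obtain ⟨ih1, ih2⟩ := ih
        have hk1 : ‖u (k + 1) - ustar‖ ≤ t (k + 1) := by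
          calc ‖u (k + 1) - ustar‖ = ‖(u (k + 1) - u k) + (u k - ustar)‖ := by
                rw [sub_add_sub_cancel]
            _ ≤ ‖u (k + 1) - u k‖ + ‖u k - ustar‖ := norm_add_le _ _
            _ ≤ (t (k + 1) - t k) + t k := add_le_add ih2 ih1
            _ = t (k + 1) := by ring
        refine ⟨hk1, ?_⟩
        obtain ⟨ek, hek, heknorm⟩ := hinvert (u k) (t k) (hscal k).1 (hscal k).2 ih1
        obtain ⟨ek1, hek1, hek1norm⟩ :=
          hinvert (u (k + 1)) (t (k + 1)) (hscal (k + 1)).1 (hscal (k + 1)).2 hk1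
        have hNk : F (u k) = F' (u k) (u k - u (k + 1)) := by
          have h1 : u k - u (k + 1) = ek.symm (F (u k)) := by
            rw [hstep_eq k ek hek]; abel
          rw [h1, ← hek]
          simp
        have hTay : ‖F (u (k + 1))‖ ≤ K / 2 * ‖u (k + 1) - u k‖ ^ 2 := by
          have hmem : ∀ j : ℕ, u j ∈ closedBall ustar rminus → True := fun _ _ => trivial
          have hmemk : u k ∈ closedBall ustar rminus := by
            rw [mem_closedBall, dist_eq_norm]
            exact ih1.trans (hscal k).2.le
          have hmemk1 : u (k + 1) ∈ closedBall ustar rminus := by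
            rw [mem_closedBall, dist_eq_norm]
            exact hk1.trans (hscal (k + 1)).2.le
          have hseg : ∀ σ ∈ Set.Icc (0:ℝ) 1, u k + σ • (u (k + 1) - u k) ∈ Dstar := by
            intro σ hσ
            exact hball ((convex_closedBall ustar rminus).add_smul_sub_mem hmemk hmemk1 hσ)
          have htb := taylor_bound F F' Dstar hdiff K hK.le hLip (u k) (u (k + 1)) hseg
          have hz : F (u (k + 1)) - F (u k) - F' (u k) (u (k + 1) - u k) = F (u (k + 1)) := by
            have h4 : u (k + 1) - u k = -(u k - u (k + 1)) := by abel
            rw [hNk, h4, map_neg]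
            abel
          rwa [hz] at htb
        have hstep1 : u (k + 2) = u (k + 1) - ek1.symm (F (u (k + 1))) :=
          hstep_eq (k + 1) ek1 hek1
        have h5 : u (k + 2) - u (k + 1) = -(ek1.symm (F (u (k + 1)))) := by
          rw [hstep1]; abel
        rw [h5, norm_neg]
        have h6 : ‖ek1.symm (F (u (k + 1)))‖
            ≤ ‖(ek1.symm : Y →L[ℝ] X)‖ * ‖F (u (k + 1))‖ :=
          (ek1.symm : Y →L[ℝ] X).le_opNorm _
        have h7 : ‖F (u (k + 1))‖ ≤ K / 2 * (t (k + 1) - t k) ^ 2 := by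
          refine hTay.trans ?_
          have := norm_nonneg (u (k + 1) - u k)
          gcongr
        have h8 : ‖ek1.symm (F (u (k + 1)))‖
            ≤ (β / (1 - a * t (k + 1))) * (K / 2 * (t (k + 1) - t k) ^ 2) := by
          refine h6.trans ?_
          refine mul_le_mul hek1norm h7 (norm_nonneg _) ?_
          exact div_nonneg hβpos.le (hdpos (k + 1)).le
        refine h8.trans (le_of_eq ?_)
        rw [hstep (k + 1), hpnext k, ha]
        have hdne := (hdpos (k + 1)).ne'
        rw [ha] at hdne
        field_simp
    refine ⟨u, hu0, ?_, ?_⟩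
    · intro k
      obtain ⟨e, he, -⟩ := hinvert (u k) (t k) (hscal k).1 (hscal k).2 (hmain k).1
      exact ⟨e, he, hstep_eq k e he⟩
    · intro k
      rw [mem_closedBall, dist_eq_norm]
      exact (hmain k).1.trans (hscal k).2.le
end

section
/- Under the Kantorovich hypotheses, any Newton sequence (u^(k)) for F starting at u* whose iterates all lie in the closed ball of radius r⁻ around u* converges in X to a limit u belonging to that closed ball which satisfies F(u) = 0; in particular F has a zero in the closed ball of radius r⁻ around u*. -/
open Metric Filter Topology

/-- The Kantorovich majorant Newton sequence for `h(t) = c/2 t² - t + α` starting at `0`. -/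
noncomputable def nkAux (c α : ℝ) : ℕ → ℝ
  | 0 => 0
  | k+1 => nkAux c α k +
      (c/2 * (nkAux c α k)^2 - nkAux c α k + α)/(1 - c * nkAux c α k)

lemma nk_root {c α r s : ℝ} (hc : 0 < c) (hs2 : s^2 = 1 - 2*c*α)
    (hr : c * r = 1 - s) : c/2*r^2 - r + α = 0 := by
  have h2 : 2*c*α = 1 - s^2 := by linarith
  have h3 : 2*c*(c/2*r^2 - r + α) = (c*r)^2 - 2*(c*r) + (1 - s^2) := by rw [← h2]; ring
  rw [hr] at h3
  have h0 : 2*c*(c/2*r^2 - r + α) = 0 := by rw [h3]; ring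
  have hne : (2*c) ≠ 0 := by positivity
  exact (mul_eq_zero.mp h0).resolve_left hne

lemma nk_step {c α r s x : ℝ} (hc : 0 < c) (hα : 0 < α) (hs0 : 0 ≤ s)
    (hs2 : s^2 = 1 - 2*c*α) (hr : c * r = 1 - s) (hx0 : 0 ≤ x) (hxr : x < r) :
    0 < 1 - c*x ∧ 0 < c/2*x^2 - x + α ∧ x + (c/2*x^2 - x + α)/(1 - c*x) < r := by
  have hcx : c*x < 1 - s := by nlinarith
  have h1 : 0 < 1 - c*x := by linarith
  have h2 : 0 < c/2*x^2 - x + α := by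
    have ha : 0 < 1 - c*x - s := by linarith
    have hb : 0 < 1 - c*x + s := by linarith
    nlinarith [mul_pos ha hb]
  refine ⟨h1, h2, ?_⟩
  have hroot := nk_root hc hs2 hr
  have hrx : 0 < r - x := by linarith
  have hnum : c/2*x^2 - x + α < (r - x)*(1 - c*x) := by
    nlinarith [mul_pos (show (0:ℝ) < c/2 by linarith) (mul_pos hrx hrx)]
  have := (div_lt_iff₀ h1).mpr hnum
  linarith

lemma nk_props {c α r s : ℝ} (hc : 0 < c) (hα : 0 < α) (hs0 : 0 ≤ s)
    (hs2 : s^2 = 1 - 2*c*α) (hr : c * r = 1 - s) :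
    ∀ k, 0 ≤ nkAux c α k ∧ nkAux c α k < r := by
  intro k
  induction k with
  | zero =>
    refine ⟨le_refl 0, ?_⟩
    show (0:ℝ) < r
    nlinarith [mul_pos hc hα, hs2, hs0, sq_nonneg (s - 1)]
  | succ k ih =>
    obtain ⟨h0, h1⟩ := ih
    obtain ⟨hd, hh, hlt⟩ := nk_step hc hα hs0 hs2 hr h0 h1
    constructor
    · show 0 ≤ nkAux c α k + _
      have := le_of_lt (div_pos hh hd)
      linarith
    · exact hlt

/-- Quadratic Taylor estimate for a map with Lipschitz derivative on a convex set. -/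
lemma nk_taylor {X Y : Type*} [NormedAddCommGroup X] [NormedSpace ℝ X]
    [NormedAddCommGroup Y] [NormedSpace ℝ Y] [CompleteSpace Y]
    (F : X → Y) (F' : X → X →L[ℝ] Y) (s : Set X) (hs : Convex ℝ s)
    (hdiff : ∀ u ∈ s, HasFDerivAt F (F' u) u)
    (K : ℝ) (hK : 0 ≤ K)
    (hLip : ∀ u₁ ∈ s, ∀ u₂ ∈ s, ‖F' u₁ - F' u₂‖ ≤ K * ‖u₁ - u₂‖)
    {a b : X} (ha : a ∈ s) (hb : b ∈ s) :
    ‖F b - F a - F' a (b - a)‖ ≤ K / 2 * ‖b - a‖ ^ 2 := by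
  set v := b - a with hv
  have hmem : ∀ t : ℝ, t ∈ Set.Icc (0:ℝ) 1 → a + t • v ∈ s := fun t ht =>
    hs.add_smul_sub_mem ha hb ht
  have hderiv : ∀ t ∈ Set.uIcc (0:ℝ) 1,
      HasDerivAt (fun τ : ℝ => F (a + τ • v)) ((F' (a + t • v)) v) t := by
    intro t ht
    rw [Set.uIcc_of_le zero_le_one] at ht
    have hline : HasDerivAt (fun τ : ℝ => a + τ • v) v t := by
      simpa using ((hasDerivAt_id t).smul_const v).const_add a
    have := (hdiff _ (hmem t ht)).comp_hasDerivAt t hline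
    exact this
  have hcont : ContinuousOn (fun t : ℝ => (F' (a + t • v)) v) (Set.Icc (0:ℝ) 1) := by
    apply LipschitzOnWith.continuousOn (K := Real.toNNReal (K * ‖v‖^2))
    apply LipschitzOnWith.of_dist_le_mul
    intro t ht τ hτ
    have h1 := hLip _ (hmem t ht) _ (hmem τ hτ)
    rw [dist_eq_norm, Real.dist_eq]
    have hkey : ‖(F' (a + t•v)) v - (F' (a + τ•v)) v‖ ≤ K * ‖v‖^2 * |t - τ| := by
      calc ‖(F' (a + t•v)) v - (F' (a + τ•v)) v‖
          = ‖(F' (a + t•v) - F' (a + τ•v)) v‖ := by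
            simp [ContinuousLinearMap.sub_apply]
        _ ≤ ‖F' (a + t•v) - F' (a + τ•v)‖ * ‖v‖ :=
            ContinuousLinearMap.le_opNorm _ _
        _ ≤ (K * ‖(a + t•v) - (a + τ•v)‖) * ‖v‖ :=
            mul_le_mul_of_nonneg_right h1 (norm_nonneg v)
        _ = K * ‖v‖^2 * |t - τ| := by
            have : (a + t•v) - (a + τ•v) = (t - τ) • v := by
              rw [sub_smul]; abel
            rw [this, norm_smul, Real.norm_eq_abs]; ring
    refine hkey.trans ?_
    have : K * ‖v‖^2 ≤ (Real.toNNReal (K * ‖v‖^2) : ℝ) := by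
      rw [Real.coe_toNNReal _ (by positivity)]
    exact mul_le_mul_of_nonneg_right this (abs_nonneg _)
  have hcont' : ContinuousOn (fun t : ℝ => (F' (a + t • v)) v) (Set.uIcc (0:ℝ) 1) := by
    rwa [Set.uIcc_of_le zero_le_one]
  have hint : IntervalIntegrable (fun t : ℝ => (F' (a + t • v)) v)
      MeasureTheory.volume 0 1 := hcont'.intervalIntegrable
  have hFTC : ∫ t in (0:ℝ)..1, (F' (a + t • v)) v
      = F (a + (1:ℝ) • v) - F (a + (0:ℝ) • v) :=
    intervalIntegral.integral_eq_sub_of_hasDerivAt hderiv hint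
  have hab : F (a + (1:ℝ) • v) - F (a + (0:ℝ) • v) = F b - F a := by
    rw [one_smul, zero_smul, add_zero, hv, add_sub_cancel]
  have hkey : F b - F a - (F' a) v
      = ∫ t in (0:ℝ)..1, ((F' (a + t • v)) v - (F' a) v) := by
    rw [intervalIntegral.integral_sub hint intervalIntegrable_const,
      intervalIntegral.integral_const, hFTC, hab]
    simp
  rw [show F' a (b - a) = (F' a) v from rfl, hkey]
  have hbound : ∀ᵐ t ∂MeasureTheory.volume.restrict (Set.uIoc (0:ℝ) 1),
      ‖(F' (a + t • v)) v - (F' a) v‖ ≤ K * ‖v‖^2 * t := by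
    refine (MeasureTheory.ae_restrict_mem measurableSet_uIoc).mono ?_
    intro t ht
    rw [Set.uIoc_of_le zero_le_one] at ht
    have htm : t ∈ Set.Icc (0:ℝ) 1 := ⟨ht.1.le, ht.2⟩
    have h1 := hLip _ (hmem t htm) _ (hmem 0 ⟨le_refl 0, zero_le_one⟩)
    have h0 : a + (0:ℝ) • v = a := by simp
    rw [h0] at h1
    calc ‖(F' (a + t • v)) v - (F' a) v‖
        = ‖(F' (a + t • v) - F' a) v‖ := by simp [ContinuousLinearMap.sub_apply]
      _ ≤ ‖F' (a + t • v) - F' a‖ * ‖v‖ := ContinuousLinearMap.le_opNorm _ _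
      _ ≤ (K * ‖(a + t • v) - a‖) * ‖v‖ :=
          mul_le_mul_of_nonneg_right h1 (norm_nonneg v)
      _ = K * ‖v‖^2 * t := by
          have : (a + t • v) - a = t • v := by abel
          rw [this, norm_smul, Real.norm_eq_abs, abs_of_pos ht.1]; ring
  have hgint : IntervalIntegrable (fun t : ℝ => K * ‖v‖^2 * t)
      MeasureTheory.volume 0 1 := by
    apply Continuous.intervalIntegrable
    continuity
  have := intervalIntegral.norm_integral_le_abs_of_norm_le hbound hgint
  refine this.trans ?_
  rw [intervalIntegral.integral_const_mul, integral_id,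
    abs_of_nonneg (by nlinarith [mul_nonneg hK (sq_nonneg ‖v‖)] : (0:ℝ) ≤ K * ‖v‖^2 * ((1^2 - 0^2)/2))]
  nlinarith [mul_nonneg hK (sq_nonneg ‖v‖)]

set_option maxHeartbeats 1600000 in
/-- Newton–Kantorovich: any Newton sequence for `F` starting at `ustar` whose iterates lie in
the closed ball of radius `r⁻` around `ustar` converges to a zero of `F` in that ball. -/
theorem newton_kantorovich_sequence_converges_to_zero
    {X Y : Type*} [NormedAddCommGroup X] [NormedSpace ℝ X] [CompleteSpace X]
    [NormedAddCommGroup Y] [NormedSpace ℝ Y] [CompleteSpace Y]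
    (F : X → Y) (F' : X → X →L[ℝ] Y)
    (Dstar : Set X) (hDopen : IsOpen Dstar) (hDconv : Convex ℝ Dstar)
    (hdiff : ∀ u ∈ Dstar, HasFDerivAt F (F' u) u)
    (K : ℝ) (hK : 0 < K)
    (hLip : ∀ u₁ ∈ Dstar, ∀ u₂ ∈ Dstar, ‖F' u₁ - F' u₂‖ ≤ K * ‖u₁ - u₂‖)
    (ustar : X) (hustar : ustar ∈ Dstar)
    (Γ : X ≃L[ℝ] Y) (hΓ : (Γ : X →L[ℝ] Y) = F' ustar)
    (β α rminus : ℝ)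
    (hβ : β = ‖(Γ.symm : Y →L[ℝ] X)‖)
    (hα : α = ‖Γ.symm (F ustar)‖)
    (hsmall : β * K * α ≤ 1 / 2)
    (hrminus : rminus = (1 - Real.sqrt (1 - 2 * β * K * α)) / (β * K))
    (hball : closedBall ustar rminus ⊆ Dstar)
    (useq : ℕ → X) (h0 : useq 0 = ustar)
    (hnewton : ∀ k, ∃ e : X ≃L[ℝ] Y, (e : X →L[ℝ] Y) = F' (useq k) ∧
      useq (k + 1) = useq k - e.symm (F (useq k)))
    (hin : ∀ k, useq k ∈ closedBall ustar rminus) :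
    ∃ u : X, Tendsto useq atTop (nhds u) ∧ u ∈ closedBall ustar rminus ∧ F u = 0 := by
  by_cases hα0 : α = 0
  · -- trivial case: F ustar = 0 and the ball degenerates to {ustar}
    have hF0 : F ustar = 0 := by
      have h1 : Γ.symm (F ustar) = 0 := by
        have h2 : ‖Γ.symm (F ustar)‖ = 0 := by rw [← hα, hα0]
        exact norm_eq_zero.mp h2
      have := congrArg Γ h1
      simpa using this
    have hr0 : rminus = 0 := by
      rw [hrminus, hα0]
      norm_num
    have hconst : ∀ k, useq k = ustar := by
      intro k
      have := hin k
      rw [hr0, mem_closedBall, dist_le_zero] at this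
      exact this
    refine ⟨ustar, ?_, ?_, hF0⟩
    · have : useq = fun _ => ustar := funext hconst
      rw [this]; exact tendsto_const_nhds
    · exact mem_closedBall_self (by rw [hr0])
  · have hαnn : 0 ≤ α := hα ▸ norm_nonneg _
    have hαpos : 0 < α := lt_of_le_of_ne hαnn (Ne.symm hα0)
    have hβpos : 0 < β := by
      have hβ0 : 0 ≤ β := hβ ▸ norm_nonneg _
      rcases hβ0.lt_or_eq with h | h
      · exact h
      · exfalso
        have hle : α ≤ β * ‖F ustar‖ := by
          rw [hα, hβ]
          exact (Γ.symm : Y →L[ℝ] X).le_opNorm _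
        rw [← h] at hle
        simp at hle
        linarith
    set c := β * K with hc
    have hcpos : 0 < c := mul_pos hβpos hK
    have hθ : 0 ≤ 1 - 2*c*α := by rw [hc]; nlinarith [hsmall]
    set s := Real.sqrt (1 - 2*c*α) with hsdef
    have hs2 : s^2 = 1 - 2*c*α := Real.sq_sqrt hθ
    have hs0 : 0 ≤ s := Real.sqrt_nonneg _
    have hs1 : s < 1 := by nlinarith [mul_pos hcpos hαpos]
    have hr : c * rminus = 1 - s := by
      have harg : 1 - 2*β*K*α = 1 - 2*c*α := by rw [hc]; ring
      rw [hrminus, harg, ← hsdef]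
      field_simp
    have props : ∀ k, 0 ≤ nkAux c α k ∧ nkAux c α k < rminus :=
      nk_props hcpos hαpos hs0 hs2 hr
    have hrec : ∀ k, nkAux c α (k+1) = nkAux c α k +
        (c/2 * (nkAux c α k)^2 - nkAux c α k + α)/(1 - c * nkAux c α k) :=
      fun k => rfl
    -- inverse estimate
    have hinv : ∀ k, ‖useq k - ustar‖ ≤ nkAux c α k →
        (1 - c * nkAux c α k) * ‖useq (k+1) - useq k‖ ≤ β * ‖F (useq k)‖ := by
      intro k hk
      obtain ⟨e, he, hstep⟩ := hnewton k
      have hx : useq (k+1) - useq k = -(e.symm (F (useq k))) := by rw [hstep]; abel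
      set x := e.symm (F (useq k)) with hxdef
      have hex : (F' (useq k)) x = F (useq k) := by
        rw [← he]; exact e.apply_symm_apply _
      have hΓx : Γ.symm ((F' ustar) x) = x := by
        rw [← hΓ]; exact Γ.symm_apply_apply x
      have hid : x = Γ.symm (F (useq k)) - Γ.symm ((F' (useq k) - F' ustar) x) := by
        have h5 : (F' ustar) x = F (useq k) - (F' (useq k) - F' ustar) x := by
          rw [← hex]; simp [ContinuousLinearMap.sub_apply]
        calc x = Γ.symm ((F' ustar) x) := hΓx.symm
          _ = Γ.symm (F (useq k) - (F' (useq k) - F' ustar) x) := by rw [h5]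
          _ = Γ.symm (F (useq k)) - Γ.symm ((F' (useq k) - F' ustar) x) := map_sub _ _ _
      have hb1 : ‖Γ.symm (F (useq k))‖ ≤ β * ‖F (useq k)‖ := by
        rw [hβ]; exact (Γ.symm : Y →L[ℝ] X).le_opNorm _
      have hb2 : ‖Γ.symm ((F' (useq k) - F' ustar) x)‖
          ≤ β * (K * ‖useq k - ustar‖ * ‖x‖) := by
        calc ‖Γ.symm ((F' (useq k) - F' ustar) x)‖
            ≤ β * ‖(F' (useq k) - F' ustar) x‖ := by
              rw [hβ]; exact (Γ.symm : Y →L[ℝ] X).le_opNorm _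
          _ ≤ β * (‖F' (useq k) - F' ustar‖ * ‖x‖) :=
              mul_le_mul_of_nonneg_left (ContinuousLinearMap.le_opNorm _ _) hβpos.le
          _ ≤ β * (K * ‖useq k - ustar‖ * ‖x‖) := by
              have h6 := hLip _ (hball (hin k)) _ hustar
              exact mul_le_mul_of_nonneg_left
                (mul_le_mul_of_nonneg_right h6 (norm_nonneg x)) hβpos.le
      have hxle : ‖x‖ ≤ β * ‖F (useq k)‖ + β * (K * ‖useq k - ustar‖ * ‖x‖) := by
        calc ‖x‖ = ‖Γ.symm (F (useq k)) - Γ.symm ((F' (useq k) - F' ustar) x)‖ := by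
              rw [← hid]
          _ ≤ ‖Γ.symm (F (useq k))‖ + ‖Γ.symm ((F' (useq k) - F' ustar) x)‖ :=
              norm_sub_le _ _
          _ ≤ _ := add_le_add hb1 hb2
      rw [hx, norm_neg]
      have hKt : β * (K * ‖useq k - ustar‖ * ‖x‖) ≤ β * (K * nkAux c α k * ‖x‖) := by
        have := mul_le_mul_of_nonneg_right
          (mul_le_mul_of_nonneg_left hk hK.le) (norm_nonneg x)
        exact mul_le_mul_of_nonneg_left this hβpos.le
      have hcc : β * (K * nkAux c α k * ‖x‖) = c * nkAux c α k * ‖x‖ := by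
        rw [hc]; ring
      have hexp : (1 - c * nkAux c α k) * ‖x‖ = ‖x‖ - c * nkAux c α k * ‖x‖ := by ring
      linarith [hxle, hKt]
    -- quadratic bound on F at next iterate
    have hFb : ∀ k, ‖F (useq (k+1))‖ ≤ K/2 * ‖useq (k+1) - useq k‖^2 := by
      intro k
      obtain ⟨e, he, hstep⟩ := hnewton k
      have hd : useq (k+1) - useq k = -(e.symm (F (useq k))) := by rw [hstep]; abel
      have hlin : F (useq k) + (F' (useq k)) (useq (k+1) - useq k) = 0 := by
        rw [hd, map_neg, ← he]
        simp
      have htay := nk_taylor F F' (closedBall ustar rminus) (convex_closedBall _ _)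
        (fun u hu => hdiff u (hball hu)) K hK.le
        (fun u₁ h1 u₂ h2 => hLip _ (hball h1) _ (hball h2))
        (hin k) (hin (k+1))
      calc ‖F (useq (k+1))‖
          = ‖F (useq (k+1)) - F (useq k) - (F' (useq k)) (useq (k+1) - useq k)‖ := by
            rw [show F (useq (k+1)) - F (useq k) - (F' (useq k)) (useq (k+1) - useq k)
              = F (useq (k+1)) - (F (useq k) + (F' (useq k)) (useq (k+1) - useq k)) by abel,
              hlin, sub_zero]
        _ ≤ K/2 * ‖useq (k+1) - useq k‖^2 := htay
    -- main induction
    have key : ∀ k, ‖useq (k+1) - useq k‖ ≤ nkAux c α (k+1) - nkAux c α k ∧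
        ‖useq k - ustar‖ ≤ nkAux c α k := by
      intro k
      induction k with
      | zero =>
        constructor
        · obtain ⟨e, he, hstep⟩ := hnewton 0
          have heΓ : (e : X →L[ℝ] Y) = (Γ : X →L[ℝ] Y) := by rw [he, h0, hΓ]
          have hesymm : e.symm (F ustar) = Γ.symm (F ustar) := by
            apply Γ.injective
            rw [Γ.apply_symm_apply]
            have h2 : (e : X →L[ℝ] Y) (e.symm (F ustar)) = F ustar := by
              simp
            calc Γ (e.symm (F ustar))
                = (Γ : X →L[ℝ] Y) (e.symm (F ustar)) := rfl
              _ = (e : X →L[ℝ] Y) (e.symm (F ustar)) := by rw [heΓ]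
              _ = F ustar := h2
          have hd : useq 1 - useq 0 = -(e.symm (F (useq 0))) := by rw [hstep]; abel
          rw [hd, norm_neg, h0, hesymm, ← hα]
          have h1 : nkAux c α 1 = α := by
            show (0:ℝ) + (c/2 * 0^2 - 0 + α)/(1 - c * 0) = α
            norm_num
          have h2 : nkAux c α 0 = 0 := rfl
          rw [h1, h2]; linarith
        · rw [h0]; show ‖ustar - ustar‖ ≤ 0; simp
      | succ k ih =>
        obtain ⟨ih1, ih2⟩ := ih
        have h2 : ‖useq (k+1) - ustar‖ ≤ nkAux c α (k+1) := by
          have htri : ‖useq (k+1) - ustar‖ ≤ ‖useq (k+1) - useq k‖ + ‖useq k - ustar‖ := by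
            simpa [dist_eq_norm] using dist_triangle (useq (k+1)) (useq k) ustar
          linarith
        refine ⟨?_, h2⟩
        obtain ⟨hd0, hh0, _⟩ := nk_step hcpos hαpos hs0 hs2 hr (props k).1 (props k).2
        obtain ⟨hd1, hh1, _⟩ := nk_step hcpos hαpos hs0 hs2 hr (props (k+1)).1 (props (k+1)).2
        have hΔpos : 0 < nkAux c α (k+1) - nkAux c α k := by
          rw [hrec k]
          have := div_pos hh0 hd0
          linarith
        have hFΔ : ‖F (useq (k+1))‖ ≤ K/2 * (nkAux c α (k+1) - nkAux c α k)^2 := by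
          refine (hFb k).trans ?_
          have h6 := norm_nonneg (useq (k+1) - useq k)
          nlinarith [mul_le_mul ih1 ih1 h6 hΔpos.le, hK.le]
        have hinv1 := hinv (k+1) h2
        have hΔeq : (nkAux c α (k+1) - nkAux c α k) * (1 - c * nkAux c α k)
            = c/2 * (nkAux c α k)^2 - nkAux c α k + α := by
          rw [hrec k]
          rw [add_sub_cancel_left, div_mul_cancel₀ _ hd0.ne']
        have hnum : c/2 * (nkAux c α (k+1))^2 - nkAux c α (k+1) + α
            = c/2 * (nkAux c α (k+1) - nkAux c α k)^2 := by
          linear_combination -hΔeq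
        have h7 : (1 - c * nkAux c α (k+1)) * ‖useq (k+2) - useq (k+1)‖
            ≤ c/2 * (nkAux c α (k+1) - nkAux c α k)^2 := by
          have h3 : β * ‖F (useq (k+1))‖
              ≤ β * (K/2 * (nkAux c α (k+1) - nkAux c α k)^2) :=
            mul_le_mul_of_nonneg_left hFΔ hβpos.le
          have h4 : β * (K/2 * (nkAux c α (k+1) - nkAux c α k)^2)
              = c/2 * (nkAux c α (k+1) - nkAux c α k)^2 := by rw [hc]; ring
          linarith [hinv1]
        have h8 : ‖useq (k+2) - useq (k+1)‖
            ≤ (c/2 * (nkAux c α (k+1) - nkAux c α k)^2)/(1 - c * nkAux c α (k+1)) := by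
          rw [le_div_iff₀ hd1, mul_comm]
          exact h7
        refine h8.trans ?_
        rw [hrec (k+1), hnum]
        linarith
    -- limit of the majorant sequence
    have hmono : Monotone (nkAux c α) := by
      apply monotone_nat_of_le_succ
      intro k
      obtain ⟨hd, hh, _⟩ := nk_step hcpos hαpos hs0 hs2 hr (props k).1 (props k).2
      rw [hrec k]
      have := le_of_lt (div_pos hh hd)
      linarith
    have hbdd : BddAbove (Set.range (nkAux c α)) := by
      refine ⟨rminus, ?_⟩
      rintro _ ⟨k, rfl⟩
      exact (props k).2.le
    have htL := tendsto_atTop_ciSup hmono hbdd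
    set L := ⨆ k, nkAux c α k with hL
    have htle : ∀ k, nkAux c α k ≤ L := fun k => le_ciSup hbdd k
    have hdist : ∀ n m, n ≤ m →
        dist (useq n) (useq m) ≤ nkAux c α m - nkAux c α n := by
      intro n m hnm
      induction m, hnm using Nat.le_induction with
      | base => simp
      | succ m hnm ih =>
        have hstep : dist (useq m) (useq (m+1)) ≤ nkAux c α (m+1) - nkAux c α m := by
          rw [dist_eq_norm']
          exact (key m).1
        calc dist (useq n) (useq (m+1))
            ≤ dist (useq n) (useq m) + dist (useq m) (useq (m+1)) := dist_triangle _ _ _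
          _ ≤ (nkAux c α m - nkAux c α n) + (nkAux c α (m+1) - nkAux c α m) :=
              add_le_add ih hstep
          _ = nkAux c α (m+1) - nkAux c α n := by ring
    have hcauchy : CauchySeq useq := by
      apply cauchySeq_of_le_tendsto_0' (fun n => L - nkAux c α n)
      · intro n m hnm
        exact (hdist n m hnm).trans (by linarith [htle m])
      · have : Tendsto (fun n => L - nkAux c α n) atTop (𝓝 (L - L)) :=
          tendsto_const_nhds.sub htL
        simpa using this
    obtain ⟨u, hu⟩ := cauchySeq_tendsto_of_complete hcauchy
    have humem : u ∈ closedBall ustar rminus :=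
      isClosed_closedBall.mem_of_tendsto hu (Eventually.of_forall hin)
    refine ⟨u, hu, humem, ?_⟩
    have hFcont : ContinuousAt F u := (hdiff u (hball humem)).differentiableAt.continuousAt
    have h1 : Tendsto (fun k => F (useq (k+1))) atTop (𝓝 (F u)) :=
      hFcont.tendsto.comp (hu.comp (tendsto_add_atTop_nat 1))
    have h2 : Tendsto (fun k => F (useq (k+1))) atTop (𝓝 0) := by
      have hb : ∀ k, ‖F (useq (k+1))‖ ≤ K/2 * (nkAux c α (k+1) - nkAux c α k)^2 := by
        intro k
        refine (hFb k).trans ?_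
        have h5 := (key k).1
        have h6 := norm_nonneg (useq (k+1) - useq k)
        nlinarith [mul_le_mul h5 h5 h6 (h6.trans h5), hK.le]
      apply squeeze_zero_norm hb
      have hshift : Tendsto (fun k => nkAux c α (k+1)) atTop (𝓝 L) :=
        htL.comp (tendsto_add_atTop_nat 1)
      have : Tendsto (fun k => K/2 * (nkAux c α (k+1) - nkAux c α k)^2) atTop
          (𝓝 (K/2 * (L - L)^2)) :=
        tendsto_const_nhds.mul ((hshift.sub htL).pow 2)
      simpa using this
    exact tendsto_nhds_unique h1 h2
end

section
/- Under the Kantorovich hypotheses with the strict inequality βKα < 1/2, any Newton sequence (u^(k)) for F starting at u* whose iterates all lie in the closed ball of radius r⁻ around u* converges to its limit u (a zero of F) at least quadratically: there exists a constant C > 0 such that ‖u^(k+1) − u‖_X ≤ C ‖u^(k) − u‖_X² for all k. -/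
open Metric Filter

noncomputable def kantSeq (c a : ℝ) : ℕ → ℝ
  | 0 => 0
  | (k+1) => kantSeq c a k +
      (c / 2 * (kantSeq c a k) ^ 2 - kantSeq c a k + a) / (1 - c * kantSeq c a k)

lemma kantSeq_inv (c a r s0 : ℝ) (hc : 0 ≤ c) (ha : 0 ≤ a) (hs0 : 0 < s0) (hr0 : 0 ≤ r)
    (hcr : c * r = 1 - s0) (hroot : c / 2 * r ^ 2 - r + a = 0) :
    ∀ k, 0 ≤ kantSeq c a k ∧ kantSeq c a k ≤ r ∧
      0 ≤ c / 2 * (kantSeq c a k) ^ 2 - kantSeq c a k + a := by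
  intro k
  induction k with
  | zero => exact ⟨le_refl _, hr0, by simpa [kantSeq] using ha⟩
  | succ k ih =>
    obtain ⟨h1, h2, h3⟩ := ih
    set s := kantSeq c a k with hs
    have hD : s0 ≤ 1 - c * s := by nlinarith [mul_le_mul_of_nonneg_left h2 hc]
    have hDpos : 0 < 1 - c * s := lt_of_lt_of_le hs0 hD
    have hd0 : 0 ≤ (c / 2 * s ^ 2 - s + a) / (1 - c * s) := div_nonneg h3 hDpos.le
    have hnext : kantSeq c a (k+1) = s + (c / 2 * s ^ 2 - s + a) / (1 - c * s) := rfl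
    refine ⟨by linarith, ?_, ?_⟩
    · rw [hnext]
      have hle : (c / 2 * s ^ 2 - s + a) / (1 - c * s) ≤ r - s := by
        rw [div_le_iff₀ hDpos]
        nlinarith [mul_nonneg hc (sq_nonneg (r - s))]
      linarith
    · rw [hnext]
      set d := (c / 2 * s ^ 2 - s + a) / (1 - c * s) with hdd
      have hDd : d * (1 - c * s) = c / 2 * s ^ 2 - s + a := div_mul_cancel₀ _ hDpos.ne'
      have : c / 2 * (s + d) ^ 2 - (s + d) + a = c / 2 * d ^ 2 := by linear_combination -hDd
      rw [this]
      positivity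

lemma taylor_half {X Y : Type*} [NormedAddCommGroup X] [NormedSpace ℝ X]
    [NormedAddCommGroup Y] [NormedSpace ℝ Y]
    (F : X → Y) (F' : X → X →L[ℝ] Y) (s : Set X) (hconv : Convex ℝ s)
    (hdiff : ∀ x ∈ s, HasFDerivAt F (F' x) x)
    (K : ℝ)
    (hLip : ∀ u₁ ∈ s, ∀ u₂ ∈ s, ‖F' u₁ - F' u₂‖ ≤ K * ‖u₁ - u₂‖)
    (a b : X) (ha : a ∈ s) (hb : b ∈ s) :
    ‖F b - F a - F' a (b - a)‖ ≤ K / 2 * ‖b - a‖ ^ 2 := by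
  set γ : ℝ → X := fun t => a + t • (b - a) with hγ
  have hγmem : ∀ t ∈ Set.Icc (0:ℝ) 1, γ t ∈ s := fun t ht =>
    hconv.add_smul_sub_mem ha hb ht
  set g : ℝ → Y := fun t => F (γ t) - t • (F' a (b - a)) - F a with hg
  have hγd : ∀ t : ℝ, HasDerivAt γ (b - a) t := by
    intro t
    simpa [hγ] using ((hasDerivAt_id t).smul_const (b - a)).const_add a
  have hgd : ∀ t ∈ Set.Icc (0:ℝ) 1,
      HasDerivAt g (F' (γ t) (b - a) - F' a (b - a)) t := by
    intro t ht
    have h1 : HasDerivAt (fun t => F (γ t)) (F' (γ t) (b - a)) t :=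
      (hdiff (γ t) (hγmem t ht)).comp_hasDerivAt t (hγd t)
    have h2 : HasDerivAt (fun t : ℝ => t • (F' a (b - a))) (F' a (b - a)) t := by
      simpa using (hasDerivAt_id t).smul_const (F' a (b - a))
    exact (h1.sub h2).sub_const (F a)
  have hBd : ∀ t : ℝ, HasDerivAt (fun t => K * ‖b - a‖ ^ 2 / 2 * t ^ 2)
      (K * ‖b - a‖ ^ 2 * t) t := by
    intro t
    have := (hasDerivAt_pow 2 t).const_mul (K * ‖b - a‖ ^ 2 / 2)
    refine this.congr_deriv ?_
    simp only [Nat.cast_ofNat, Nat.add_one_sub_one, pow_one]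
    ring
  have bound : ∀ t ∈ Set.Ico (0:ℝ) 1,
      ‖F' (γ t) (b - a) - F' a (b - a)‖ ≤ K * ‖b - a‖ ^ 2 * t := by
    intro t ht
    have ht' : t ∈ Set.Icc (0:ℝ) 1 := ⟨ht.1, ht.2.le⟩
    have h1 : ‖F' (γ t) (b - a) - F' a (b - a)‖ ≤ ‖F' (γ t) - F' a‖ * ‖b - a‖ := by
      have := (F' (γ t) - F' a).le_opNorm (b - a)
      simpa using this
    have h2 : ‖F' (γ t) - F' a‖ ≤ K * (t * ‖b - a‖) := by
      have := hLip (γ t) (hγmem t ht') a ha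
      have hγa : γ t - a = t • (b - a) := by simp [hγ]
      rw [hγa] at this
      simpa [norm_smul, abs_of_nonneg ht.1] using this
    calc ‖F' (γ t) (b - a) - F' a (b - a)‖ ≤ ‖F' (γ t) - F' a‖ * ‖b - a‖ := h1
      _ ≤ K * (t * ‖b - a‖) * ‖b - a‖ :=
        mul_le_mul_of_nonneg_right h2 (norm_nonneg _)
      _ = K * ‖b - a‖ ^ 2 * t := by ring
  have key := image_norm_le_of_norm_deriv_right_le_deriv_boundary
    (f := g) (f' := fun t => F' (γ t) (b - a) - F' a (b - a)) (a := 0) (b := 1)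
    (fun t ht => (hgd t ht).continuousAt.continuousWithinAt)
    (fun t ht => (hgd t ⟨ht.1, ht.2.le⟩).hasDerivWithinAt)
    (B := fun t => K * ‖b - a‖ ^ 2 / 2 * t ^ 2) (B' := fun t => K * ‖b - a‖ ^ 2 * t)
    (by simp [hg, hγ]) hBd bound
  have h1 := key (Set.right_mem_Icc.2 zero_le_one)
  have hγ1 : γ 1 = b := by simp [hγ]
  have hg1 : g 1 = F b - F' a (b - a) - F a := by simp [hg, hγ1]
  rw [hg1] at h1
  have heq : F b - F' a (b - a) - F a = F b - F a - F' a (b - a) := by abel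
  rw [heq] at h1
  calc ‖F b - F a - F' a (b - a)‖ ≤ K * ‖b - a‖ ^ 2 / 2 * 1 ^ 2 := h1
    _ = K / 2 * ‖b - a‖ ^ 2 := by ring

set_option maxHeartbeats 2000000 in
/-- Newton–Kantorovich with strict inequality: quadratic convergence of the Newton iterates
to the zero of `F`. -/
theorem newton_kantorovich_quadratic_convergence
    {X Y : Type*} [NormedAddCommGroup X] [NormedSpace ℝ X] [CompleteSpace X]
    [NormedAddCommGroup Y] [NormedSpace ℝ Y] [CompleteSpace Y]
    (F : X → Y) (F' : X → X →L[ℝ] Y)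
    (Dstar : Set X) (hDopen : IsOpen Dstar) (hDconv : Convex ℝ Dstar)
    (hdiff : ∀ u ∈ Dstar, HasFDerivAt F (F' u) u)
    (K : ℝ) (hK : 0 < K)
    (hLip : ∀ u₁ ∈ Dstar, ∀ u₂ ∈ Dstar, ‖F' u₁ - F' u₂‖ ≤ K * ‖u₁ - u₂‖)
    (ustar : X) (hustar : ustar ∈ Dstar)
    (Γ : X ≃L[ℝ] Y) (hΓ : (Γ : X →L[ℝ] Y) = F' ustar)
    (β α rminus : ℝ)
    (hβ : β = ‖(Γ.symm : Y →L[ℝ] X)‖)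
    (hα : α = ‖Γ.symm (F ustar)‖)
    (hsmall : β * K * α < 1 / 2)
    (hrminus : rminus = (1 - Real.sqrt (1 - 2 * β * K * α)) / (β * K))
    (hball : closedBall ustar rminus ⊆ Dstar)
    (useq : ℕ → X) (h0 : useq 0 = ustar)
    (hnewton : ∀ k, ∃ e : X ≃L[ℝ] Y, (e : X →L[ℝ] Y) = F' (useq k) ∧
      useq (k + 1) = useq k - e.symm (F (useq k)))
    (hin : ∀ k, useq k ∈ closedBall ustar rminus) :
    ∃ u : X, Tendsto useq atTop (nhds u) ∧ F u = 0 ∧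
      ∃ C : ℝ, 0 < C ∧ ∀ k, ‖useq (k + 1) - u‖ ≤ C * ‖useq k - u‖ ^ 2 := by
  have hβ0 : 0 ≤ β := hβ ▸ norm_nonneg _
  have hα0 : 0 ≤ α := hα ▸ norm_nonneg _
  have hΓn : ∀ y : Y, ‖Γ.symm y‖ ≤ β * ‖y‖ := by
    intro y; rw [hβ]; exact (Γ.symm : Y →L[ℝ] X).le_opNorm y
  have hβα : β = 0 → α = 0 := by
    intro h
    have h1 := hΓn (F ustar)
    rw [h, zero_mul] at h1
    rw [hα]
    exact le_antisymm h1 (norm_nonneg _)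
  have h2h : 0 < 1 - 2 * β * K * α := by nlinarith
  set s0 := Real.sqrt (1 - 2 * β * K * α) with hs0def
  have hs0 : 0 < s0 := Real.sqrt_pos.2 h2h
  have hs0sq : s0 ^ 2 = 1 - 2 * β * K * α := Real.sq_sqrt h2h.le
  have hcnn : 0 ≤ β * K := mul_nonneg hβ0 hK.le
  have hrm0 : 0 ≤ rminus := by
    have := hin 0
    rw [h0, mem_closedBall, dist_self] at this
    exact this
  have hcr : β * K * rminus = 1 - s0 := by
    by_cases hb : β = 0
    · have ha0 := hβα hb
      rw [hs0def, hb, ha0]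
      simp
    · have hbpos : 0 < β := lt_of_le_of_ne hβ0 (Ne.symm hb)
      have hbK : 0 < β * K := mul_pos hbpos hK
      rw [hrminus]
      field_simp
  have hroot : β * K / 2 * rminus ^ 2 - rminus + α = 0 := by
    have h2 : (1 + s0) * rminus = 2 * α := by
      by_cases hb : β = 0
      · have ha0 := hβα hb
        have hr : rminus = 0 := by rw [hrminus, hb]; simp
        rw [hr, ha0]; ring
      · have hbpos : 0 < β := lt_of_le_of_ne hβ0 (Ne.symm hb)
        have hbK : 0 < β * K := mul_pos hbpos hK
        have hr : rminus = (1 - s0) / (β * K) := by rw [hrminus]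
        rw [hr]
        field_simp
        nlinarith [hs0sq]
    linear_combination (rminus / 2) * hcr - (1 / 2) * h2
  set tq : ℕ → ℝ := kantSeq (β * K) α with htqdef
  have hsc := kantSeq_inv (β * K) α rminus s0 hcnn hα0 hs0 hrm0 hcr hroot
  have hstep_eq : ∀ k, tq (k + 1)
      = tq k + (β * K / 2 * (tq k) ^ 2 - tq k + α) / (1 - β * K * tq k) := fun k => rfl
  have hDk : ∀ k, s0 ≤ 1 - β * K * tq k := by
    intro k
    have h2 := (hsc k).2.1
    nlinarith [mul_le_mul_of_nonneg_left h2 hcnn]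
  have hDkpos : ∀ k, 0 < 1 - β * K * tq k := fun k => lt_of_lt_of_le hs0 (hDk k)
  have hmonostep : ∀ k, tq k ≤ tq (k + 1) := by
    intro k
    have := div_nonneg (hsc k).2.2 (hDkpos k).le
    rw [hstep_eq k]
    linarith
  -- inverse bound
  have hinvb : ∀ v ∈ closedBall ustar rminus, ∀ e : X ≃L[ℝ] Y,
      (e : X →L[ℝ] Y) = F' v → ∀ y : Y,
      ‖e.symm y‖ ≤ ‖Γ.symm y‖ + β * K * ‖v - ustar‖ * ‖e.symm y‖ := by
    intro v hv e he y
    set x := e.symm y with hx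
    have hvD : v ∈ Dstar := hball hv
    have hFx : F' v x = y := by
      rw [← he]; exact e.apply_symm_apply y
    have h1 : (F' v - F' ustar) x = y - Γ x := by
      rw [ContinuousLinearMap.sub_apply, hFx, ← hΓ]
      rfl
    have hxid : x = Γ.symm y - Γ.symm ((F' v - F' ustar) x) := by
      rw [h1, map_sub, Γ.symm_apply_apply]
      abel
    have hA := (F' v - F' ustar).le_opNorm x
    have hL := hLip v hvD ustar hustar
    calc ‖x‖ = ‖Γ.symm y - Γ.symm ((F' v - F' ustar) x)‖ := by rw [← hxid]
      _ ≤ ‖Γ.symm y‖ + ‖Γ.symm ((F' v - F' ustar) x)‖ := norm_sub_le _ _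
      _ ≤ ‖Γ.symm y‖ + β * ‖(F' v - F' ustar) x‖ := by
          linarith [hΓn ((F' v - F' ustar) x)]
      _ ≤ ‖Γ.symm y‖ + β * K * ‖v - ustar‖ * ‖x‖ := by
          nlinarith [norm_nonneg x, norm_nonneg ((F' v - F' ustar) x),
            mul_le_mul_of_nonneg_right hL (norm_nonneg x)]
  have htayball := fun (a b : X) (ha : a ∈ closedBall ustar rminus)
      (hb : b ∈ closedBall ustar rminus) =>
    taylor_half F F' (closedBall ustar rminus) (convex_closedBall _ _)
      (fun x hx => hdiff x (hball hx)) K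
      (fun u1 h1 u2 h2 => hLip u1 (hball h1) u2 (hball h2)) a b ha hb
  -- step bound, given the invariants at k
  have hstepb : ∀ k, ‖useq k - ustar‖ ≤ tq k →
      ‖Γ.symm (F (useq k))‖ ≤ β * K / 2 * (tq k) ^ 2 - tq k + α →
      ‖useq (k + 1) - useq k‖ ≤ tq (k + 1) - tq k := by
    intro k ih1 ih2
    obtain ⟨e, he, hstepk⟩ := hnewton k
    have hx := hinvb (useq k) (hin k) e he (F (useq k))
    have hb1 : β * K * ‖useq k - ustar‖ ≤ β * K * tq k := mul_le_mul_of_nonneg_left ih1 hcnn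
    have hxk : ‖e.symm (F (useq k))‖
        ≤ (β * K / 2 * (tq k) ^ 2 - tq k + α) / (1 - β * K * tq k) := by
      rw [le_div_iff₀ (hDkpos k)]
      nlinarith [norm_nonneg (e.symm (F (useq k)))]
    have h1 : useq (k + 1) - useq k = -(e.symm (F (useq k))) := by rw [hstepk]; abel
    rw [h1, norm_neg, hstep_eq k]
    linarith
  -- main induction
  have main : ∀ k, ‖useq k - ustar‖ ≤ tq k ∧
      ‖Γ.symm (F (useq k))‖ ≤ β * K / 2 * (tq k) ^ 2 - tq k + α := by
    intro k
    induction k with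
    | zero =>
      constructor
      · simp [h0, htqdef, kantSeq]
      · have h00 : tq 0 = 0 := rfl
        rw [h00, h0, ← hα]
        norm_num
    | succ k ih =>
      obtain ⟨ih1, ih2⟩ := ih
      obtain ⟨e, he, hstepk⟩ := hnewton k
      have hΔ := hstepb k ih1 ih2
      have hd0 : 0 ≤ tq (k + 1) - tq k := le_trans (norm_nonneg _) hΔ
      constructor
      · have hsplit : useq (k + 1) - ustar = (useq (k + 1) - useq k) + (useq k - ustar) := by
          abel
        calc ‖useq (k + 1) - ustar‖ ≤ ‖useq (k + 1) - useq k‖ + ‖useq k - ustar‖ := by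
              rw [hsplit]; exact norm_add_le _ _
          _ ≤ (tq (k + 1) - tq k) + tq k := add_le_add hΔ ih1
          _ = tq (k + 1) := by ring
      · have h1 : useq (k + 1) - useq k = -(e.symm (F (useq k))) := by rw [hstepk]; abel
        have hlin : F' (useq k) (useq (k + 1) - useq k) = -(F (useq k)) := by
          rw [h1, ← he]
          simp
        have heq : F (useq (k + 1)) - F (useq k) - F' (useq k) (useq (k + 1) - useq k)
            = F (useq (k + 1)) := by rw [hlin]; abel
        have hFval : ‖F (useq (k + 1))‖ ≤ K / 2 * ‖useq (k + 1) - useq k‖ ^ 2 := by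
          rw [← heq]
          exact htayball (useq k) (useq (k + 1)) (hin k) (hin (k + 1))
        have hsq : ‖useq (k + 1) - useq k‖ ^ 2 ≤ (tq (k + 1) - tq k) ^ 2 :=
          pow_le_pow_left₀ (norm_nonneg _) hΔ 2
        have hDd : (tq (k + 1) - tq k) * (1 - β * K * tq k)
            = β * K / 2 * (tq k) ^ 2 - tq k + α := by
          have hδ : tq (k + 1) - tq k
              = (β * K / 2 * (tq k) ^ 2 - tq k + α) / (1 - β * K * tq k) := by
            rw [hstep_eq k]; ring
          rw [hδ]
          exact div_mul_cancel₀ _ (hDkpos k).ne'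
        have hPid : β * K / 2 * (tq (k + 1)) ^ 2 - tq (k + 1) + α
            = β * K / 2 * (tq (k + 1) - tq k) ^ 2 := by linear_combination -hDd
        rw [hPid]
        calc ‖Γ.symm (F (useq (k + 1)))‖ ≤ β * ‖F (useq (k + 1))‖ := hΓn _
          _ ≤ β * (K / 2 * (tq (k + 1) - tq k) ^ 2) := by
              apply mul_le_mul_of_nonneg_left _ hβ0
              calc ‖F (useq (k + 1))‖ ≤ K / 2 * ‖useq (k + 1) - useq k‖ ^ 2 := hFval
                _ ≤ K / 2 * (tq (k + 1) - tq k) ^ 2 := by nlinarith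
          _ = β * K / 2 * (tq (k + 1) - tq k) ^ 2 := by ring
  -- convergence
  have hdist : ∀ n, dist (useq n) (useq (n + 1)) ≤ tq (n + 1) - tq n := by
    intro n
    rw [dist_eq_norm, norm_sub_rev]
    exact hstepb n (main n).1 (main n).2
  have hsum : Summable (fun n => tq (n + 1) - tq n) := by
    apply summable_of_sum_range_le (c := rminus) (fun n => by linarith [hmonostep n])
    intro n
    rw [Finset.sum_range_sub (f := tq)]
    have h1 : tq 0 = 0 := rfl
    rw [h1]
    linarith [(hsc n).2.1]
  have hcauchy : CauchySeq useq := cauchySeq_of_dist_le_of_summable _ hdist hsum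
  obtain ⟨u, hu⟩ := cauchySeq_tendsto_of_complete hcauchy
  have huball : u ∈ closedBall ustar rminus :=
    isClosed_closedBall.mem_of_tendsto hu (Eventually.of_forall hin)
  have huD : u ∈ Dstar := hball huball
  -- limit of the scalar sequence
  have hmono : Monotone tq := monotone_nat_of_le_succ hmonostep
  have hbdd : BddAbove (Set.range tq) := ⟨rminus, by rintro _ ⟨k, rfl⟩; exact (hsc k).2.1⟩
  set L := ⨆ k, tq k with hLdef
  have htL : Tendsto tq atTop (nhds L) := tendsto_atTop_ciSup hmono hbdd
  have hLr : L ≤ rminus := ciSup_le fun k => (hsc k).2.1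
  have hDL : 0 < 1 - β * K * L := by
    have h1 : β * K * L ≤ β * K * rminus := mul_le_mul_of_nonneg_left hLr hcnn
    rw [hcr] at h1
    linarith
  have hnum : Tendsto (fun k => β * K / 2 * (tq k) ^ 2 - tq k + α) atTop
      (nhds (β * K / 2 * L ^ 2 - L + α)) :=
    (((htL.pow 2).const_mul (β * K / 2)).sub htL).add_const α
  have hPL : β * K / 2 * L ^ 2 - L + α = 0 := by
    have h1 : Tendsto (fun k => tq (k + 1)) atTop (nhds L) :=
      htL.comp (tendsto_add_atTop_nat 1)
    have hden : Tendsto (fun k => 1 - β * K * tq k) atTop (nhds (1 - β * K * L)) :=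
      (htL.const_mul (β * K)).const_sub 1
    have h2 : Tendsto (fun k => tq k + (β * K / 2 * (tq k) ^ 2 - tq k + α)
        / (1 - β * K * tq k)) atTop
        (nhds (L + (β * K / 2 * L ^ 2 - L + α) / (1 - β * K * L))) :=
      htL.add (hnum.div hden hDL.ne')
    have h3 : (fun k => tq (k + 1)) = fun k => tq k
        + (β * K / 2 * (tq k) ^ 2 - tq k + α) / (1 - β * K * tq k) := funext hstep_eq
    rw [h3] at h1
    have h4 := tendsto_nhds_unique h1 h2
    have h5 : (β * K / 2 * L ^ 2 - L + α) / (1 - β * K * L) = 0 := by linarith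
    exact (div_eq_zero_iff.mp h5).resolve_right hDL.ne'
  have hPt0 : Tendsto (fun k => β * K / 2 * (tq k) ^ 2 - tq k + α) atTop (nhds 0) := by
    rw [← hPL]; exact hnum
  have hFu : F u = 0 := by
    have hFc : ContinuousAt F u := (hdiff u huD).continuousAt
    have hc1 : Tendsto (fun k => F (useq k)) atTop (nhds (F u)) := hFc.tendsto.comp hu
    have hc2 : Tendsto (fun k => Γ.symm (F (useq k))) atTop (nhds (Γ.symm (F u))) :=
      (Γ.symm.continuous.tendsto _).comp hc1
    have hc3 : Tendsto (fun k => ‖Γ.symm (F (useq k))‖) atTop (nhds ‖Γ.symm (F u)‖) :=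
      (continuous_norm.tendsto _).comp hc2
    have hle : ‖Γ.symm (F u)‖ ≤ 0 :=
      le_of_tendsto_of_tendsto' hc3 hPt0 fun k => (main k).2
    have hz : Γ.symm (F u) = 0 :=
      norm_eq_zero.mp (le_antisymm hle (norm_nonneg _))
    have := congrArg Γ hz
    simpa using this
  refine ⟨u, hu, hFu, β * K / (2 * s0) + 1, ?_, ?_⟩
  · have : 0 ≤ β * K / (2 * s0) := div_nonneg hcnn (by linarith)
    linarith
  · intro k
    obtain ⟨e, he, hstepk⟩ := hnewton k
    set z := -(F (useq k)) - F' (useq k) (u - useq k) with hzdef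
    have hz : useq (k + 1) - u = e.symm z := by
      have h1 : e.symm (F' (useq k) (u - useq k)) = u - useq k := by
        rw [← he]; exact e.symm_apply_apply _
      rw [hzdef, map_sub, map_neg, h1, hstepk]
      abel
    have hzn : ‖z‖ ≤ K / 2 * ‖u - useq k‖ ^ 2 := by
      have h1 : z = F u - F (useq k) - F' (useq k) (u - useq k) := by
        rw [hzdef, hFu]; abel
      rw [h1]
      exact htayball (useq k) u (hin k) huball
    have hib := hinvb (useq k) (hin k) e he z
    have hbk : β * K * ‖useq k - ustar‖ ≤ 1 - s0 := by
      have h1 : ‖useq k - ustar‖ ≤ rminus := by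
        have := hin k
        rwa [mem_closedBall, dist_eq_norm] at this
      calc β * K * ‖useq k - ustar‖ ≤ β * K * rminus := mul_le_mul_of_nonneg_left h1 hcnn
        _ = 1 - s0 := hcr
    have hfin : s0 * ‖e.symm z‖ ≤ β * ‖z‖ := by
      nlinarith [norm_nonneg (e.symm z), hΓn z]
    have hn2 : ‖u - useq k‖ = ‖useq k - u‖ := norm_sub_rev _ _
    rw [hz]
    have h1 : ‖e.symm z‖ ≤ (β * K / 2 * ‖useq k - u‖ ^ 2) / s0 := by
      rw [le_div_iff₀ hs0]
      have h2 : β * ‖z‖ ≤ β * (K / 2 * ‖useq k - u‖ ^ 2) := by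
        apply mul_le_mul_of_nonneg_left _ hβ0
        rw [← hn2]
        exact hzn
      nlinarith
    have h3 : (β * K / 2 * ‖useq k - u‖ ^ 2) / s0
        = β * K / (2 * s0) * ‖useq k - u‖ ^ 2 := by
      field_simp
    rw [h3] at h1
    nlinarith [sq_nonneg ‖useq k - u‖]
end
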